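/- Let ρ_{XY} be a state on ℂ^m ⊗ ℂ^n and σ_{XY'} a state on ℂ^m ⊗ ℂ^{n'}, both diagonal in the standard product basis (classical states). Then ρ_{XY} ≻_X σ_{XY'} (quantum conditional majorization with respect to the first system) holds if and only if there exists a conditionally doubly stochastic channel 𝒩 = ∑_{j=1}^k 𝒟^{(j)} ⊗ ℱ^{(j)} such that σ_{XY'} = 𝒩(ρ_{XY}), where each 𝒟^{(j)} is the quantum channel on m×m matrices induced by a doubly stochastic matrix D^{(j)} via 𝒟^{(j)}(ρ) := ∑_{x,x'} D^{(j)}_{x'x} ρ_{xx} E_{x'x'}, and each ℱ^{(j)} is a completely positive map from n×n to n'×n' matrices with ∑_{j=1}^k ℱ^{(j)} trace-preserving. -/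

import Mathlib

open Matrix Kronecker BigOperators
open scoped ENNReal ComplexOrder

noncomputable section

/-- A quantum state: a positive semidefinite matrix of trace one. -/
def IsState {α : Type} [Fintype α] (ρ : Matrix α α ℂ) : Prop :=
  ρ.PosSemidef ∧ ρ.trace = 1

/-- The Choi matrix `∑ i j, E i j ⊗ N (E i j)` of a map between matrix algebras. -/
def choiMatrix {α β : Type} [Fintype α] [DecidableEq α] [Fintype β]
    (N : Matrix α α ℂ → Matrix β β ℂ) : Matrix (α × β) (α × β) ℂ :=
  ∑ i : α, ∑ j : α, Matrix.single i j (1 : ℂ) ⊗ₖ N (Matrix.single i j 1)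

/-- A quantum channel: a linear, trace-preserving and completely positive map. -/
def IsChannel {α β : Type} [Fintype α] [DecidableEq α] [Fintype β]
    (N : Matrix α α ℂ → Matrix β β ℂ) : Prop :=
  IsLinearMap ℂ N ∧ (∀ X, (N X).trace = X.trace) ∧ (choiMatrix N).PosSemidef

/-- Partial trace over the first tensor factor. -/
def trA {α β : Type} [Fintype α] (ρ : Matrix (α × β) (α × β) ℂ) : Matrix β β ℂ :=
  Matrix.of fun j j' => ∑ i : α, ρ (i, j) (i, j')

/-- The uniform (maximally mixed) state of dimension `n`. -/
def unif (n : ℕ) : Matrix (Fin n) (Fin n) ℂ := (n : ℂ)⁻¹ • 1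

/-- The tensor extension `M ⊗ id` of a map `M` acting on the first factor. -/
def tensorIdRight {a a' : ℕ} (b : ℕ)
    (M : Matrix (Fin a) (Fin a) ℂ → Matrix (Fin a') (Fin a') ℂ)
    (X : Matrix (Fin a × Fin b) (Fin a × Fin b) ℂ) :
    Matrix (Fin a' × Fin b) (Fin a' × Fin b) ℂ :=
  Matrix.of fun p q => M (Matrix.of fun k k' => X (k, p.2) (k', q.2)) p.1 q.1

/-- A conditionally unital bipartite channel: it sends every state of the form
`u_A ⊗ ρ_B` to a state of the form `u_C ⊗ σ_{B'}`. -/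
def CondUnital {a b c b' : ℕ}
    (N : Matrix (Fin a × Fin b) (Fin a × Fin b) ℂ → Matrix (Fin c × Fin b') (Fin c × Fin b') ℂ) :
    Prop :=
  ∀ ρB : Matrix (Fin b) (Fin b) ℂ, IsState ρB →
    ∃ σ : Matrix (Fin b') (Fin b') ℂ, IsState σ ∧ N (unif a ⊗ₖ ρB) = unif c ⊗ₖ σ

/-- An `A ↛ B'` semi-causal bipartite channel. -/
def SemiCausal {a b c b' : ℕ}
    (N : Matrix (Fin a × Fin b) (Fin a × Fin b) ℂ → Matrix (Fin c × Fin b') (Fin c × Fin b') ℂ) :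
    Prop :=
  ∀ M : Matrix (Fin a) (Fin a) ℂ → Matrix (Fin a) (Fin a) ℂ, IsChannel M →
    ∀ X : Matrix (Fin a × Fin b) (Fin a × Fin b) ℂ,
      trA (N (tensorIdRight b M X)) = trA (N X)

/-- A locally balanced channel: a quantum channel that is both conditionally unital
and `A ↛ B'` semi-causal. -/
def LocallyBalanced {a b c b' : ℕ}
    (N : Matrix (Fin a × Fin b) (Fin a × Fin b) ℂ → Matrix (Fin c × Fin b') (Fin c × Fin b') ℂ) :
    Prop :=
  IsChannel N ∧ CondUnital N ∧ SemiCausal N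

/-- Conditional majorization `ρ ≻_A σ` with respect to the first system. -/
def CondMaj {a b a' b' : ℕ}
    (ρ : Matrix (Fin a × Fin b) (Fin a × Fin b) ℂ)
    (σ : Matrix (Fin a' × Fin b') (Fin a' × Fin b') ℂ) : Prop :=
  (a' ≥ a ∧ ∃ (V : Matrix (Fin a') (Fin a) ℂ)
      (N : Matrix (Fin a × Fin b) (Fin a × Fin b) ℂ →
           Matrix (Fin a × Fin b') (Fin a × Fin b') ℂ),
      Vᴴ * V = 1 ∧ LocallyBalanced N ∧
      σ = (V ⊗ₖ (1 : Matrix (Fin b') (Fin b') ℂ)) * N ρ *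
            (V ⊗ₖ (1 : Matrix (Fin b') (Fin b') ℂ))ᴴ) ∨
  (a ≥ a' ∧ ∃ (U : Matrix (Fin a) (Fin a') ℂ)
      (N : Matrix (Fin a × Fin b) (Fin a × Fin b) ℂ →
           Matrix (Fin a × Fin b') (Fin a × Fin b') ℂ),
      Uᴴ * U = 1 ∧ LocallyBalanced N ∧
      (U ⊗ₖ (1 : Matrix (Fin b') (Fin b') ℂ)) * σ *
          (U ⊗ₖ (1 : Matrix (Fin b') (Fin b') ℂ))ᴴ = N ρ)

/-- Relaxed conditional majorization `ρ ≻^A σ`: as `CondMaj`, with the locally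
balanced channel replaced by a mere conditionally unital channel. -/
def RelCondMaj {a b a' b' : ℕ}
    (ρ : Matrix (Fin a × Fin b) (Fin a × Fin b) ℂ)
    (σ : Matrix (Fin a' × Fin b') (Fin a' × Fin b') ℂ) : Prop :=
  (a' ≥ a ∧ ∃ (V : Matrix (Fin a') (Fin a) ℂ)
      (N : Matrix (Fin a × Fin b) (Fin a × Fin b) ℂ →
           Matrix (Fin a × Fin b') (Fin a × Fin b') ℂ),
      Vᴴ * V = 1 ∧ (IsChannel N ∧ CondUnital N) ∧
      σ = (V ⊗ₖ (1 : Matrix (Fin b') (Fin b') ℂ)) * N ρ *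
            (V ⊗ₖ (1 : Matrix (Fin b') (Fin b') ℂ))ᴴ) ∨
  (a ≥ a' ∧ ∃ (U : Matrix (Fin a) (Fin a') ℂ)
      (N : Matrix (Fin a × Fin b) (Fin a × Fin b) ℂ →
           Matrix (Fin a × Fin b') (Fin a × Fin b') ℂ),
      Uᴴ * U = 1 ∧ (IsChannel N ∧ CondUnital N) ∧
      (U ⊗ₖ (1 : Matrix (Fin b') (Fin b') ℂ)) * σ *
          (U ⊗ₖ (1 : Matrix (Fin b') (Fin b') ℂ))ᴴ = N ρ)

/-- Reordering `(A × B) × (A' × B') ≃ AA' × BB'`. -/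
def sysEquiv (a b a' b' : ℕ) :
    (Fin a × Fin b) × (Fin a' × Fin b') ≃ Fin (a * a') × Fin (b * b') :=
  (Equiv.prodProdProdComm (Fin a) (Fin b) (Fin a') (Fin b')).trans
    (finProdFinEquiv.prodCongr finProdFinEquiv)

/-- The tensor product `ρ_{AB} ⊗ σ_{A'B'}` regarded as a bipartite state with
first system `AA'` and second system `BB'`. -/
def tensorState {a b a' b' : ℕ}
    (ρ : Matrix (Fin a × Fin b) (Fin a × Fin b) ℂ)
    (σ : Matrix (Fin a' × Fin b') (Fin a' × Fin b') ℂ) :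
    Matrix (Fin (a * a') × Fin (b * b')) (Fin (a * a') × Fin (b * b')) ℂ :=
  Matrix.reindex (sysEquiv a b a' b') (sysEquiv a b a' b') (ρ ⊗ₖ σ)

/-- Reindexing of a matrix on a product of `Fin` types as a matrix on a single `Fin` type. -/
def mreindex {a b : ℕ} (ρ : Matrix (Fin a × Fin b) (Fin a × Fin b) ℂ) :
    Matrix (Fin (a * b)) (Fin (a * b)) ℂ :=
  Matrix.reindex finProdFinEquiv finProdFinEquiv ρ

/-- Majorization `ρ ≻ σ` between states of possibly different dimensions. -/
def Maj {n n' : ℕ} (ρ : Matrix (Fin n) (Fin n) ℂ) (σ : Matrix (Fin n') (Fin n') ℂ) : Prop :=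
  (n' ≥ n ∧ ∃ (V : Matrix (Fin n') (Fin n) ℂ)
      (N : Matrix (Fin n) (Fin n) ℂ → Matrix (Fin n) (Fin n) ℂ),
      Vᴴ * V = 1 ∧ IsChannel N ∧ N 1 = 1 ∧ σ = V * N ρ * Vᴴ) ∨
  (n ≥ n' ∧ ∃ (U : Matrix (Fin n) (Fin n') ℂ)
      (N : Matrix (Fin n) (Fin n) ℂ → Matrix (Fin n) (Fin n) ℂ),
      Uᴴ * U = 1 ∧ IsChannel N ∧ N 1 = 1 ∧ U * σ * Uᴴ = N ρ)

/-- The conditional min-entropy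
`H_min(A|B)_ρ = - log₂ min {λ ≥ 0 : λ I_A ⊗ ρ_B - ρ_{AB} ≽ 0}`. -/
def condMinEntropy {a b : ℕ} (ρ : Matrix (Fin a × Fin b) (Fin a × Fin b) ℂ) : ℝ :=
  - Real.logb 2 (sInf {l : ℝ | 0 ≤ l ∧
      (l • ((1 : Matrix (Fin a) (Fin a) ℂ) ⊗ₖ trA ρ) - ρ).PosSemidef})

/-- The conditional min-entropy `H_min^↑(A|B)_ρ`, optimized over states `σ_B`. -/
def condMinEntropyUp {a b : ℕ} (ρ : Matrix (Fin a × Fin b) (Fin a × Fin b) ℂ) : ℝ :=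
  sSup {r : ℝ | ∃ σ : Matrix (Fin b) (Fin b) ℂ, IsState σ ∧
    (∃ l : ℝ, 0 ≤ l ∧ (l • ((1 : Matrix (Fin a) (Fin a) ℂ) ⊗ₖ σ) - ρ).PosSemidef) ∧
    r = - Real.logb 2 (sInf {l : ℝ | 0 ≤ l ∧
      (l • ((1 : Matrix (Fin a) (Fin a) ℂ) ⊗ₖ σ) - ρ).PosSemidef})}

/-- The maximally entangled state of rank `k` on `ℂ^k ⊗ ℂ^k`. -/
def maxEnt (k : ℕ) : Matrix (Fin k × Fin k) (Fin k × Fin k) ℂ :=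
  Matrix.of fun p q => if p.1 = p.2 ∧ q.1 = q.2 then (k : ℂ)⁻¹ else 0

/-- The quantum channel on `m × m` matrices induced by a doubly stochastic matrix `D`,
`ρ ↦ ∑ x x', D x' x * ρ x x • E x' x'`. -/
def dsChannel {m : ℕ} (D : Matrix (Fin m) (Fin m) ℝ) :
    Matrix (Fin m) (Fin m) ℂ → Matrix (Fin m) (Fin m) ℂ :=
  fun ρ => ∑ x : Fin m, ∑ x' : Fin m,
    (((D x' x : ℝ) : ℂ) * ρ x x) • Matrix.single x' x' (1 : ℂ)

/-- A doubly stochastic matrix: nonnegative entries, all row and column sums equal one. -/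
def IsDoublyStochastic {m : ℕ} (D : Matrix (Fin m) (Fin m) ℝ) : Prop :=
  (∀ x x', 0 ≤ D x x') ∧ (∀ x, ∑ x', D x x' = 1) ∧ (∀ x', ∑ x, D x x' = 1)

/-- The tensor product `M ⊗ F` of two (linear) maps between matrix algebras. -/
def tensorMap {m m' n n' : ℕ}
    (M : Matrix (Fin m) (Fin m) ℂ → Matrix (Fin m') (Fin m') ℂ)
    (F : Matrix (Fin n) (Fin n) ℂ → Matrix (Fin n') (Fin n') ℂ) :
    Matrix (Fin m × Fin n) (Fin m × Fin n) ℂ →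
      Matrix (Fin m' × Fin n') (Fin m' × Fin n') ℂ :=
  fun X => ∑ k : Fin m, ∑ k' : Fin m, ∑ l : Fin n, ∑ l' : Fin n,
    X (k, l) (k', l') •
      (M (Matrix.single k k' 1) ⊗ₖ F (Matrix.single l l' 1))

/-- A conditional entropy: a real-valued function on all bipartite states of all finite
dimensions that is not identically zero, reverses conditional majorization, and is
additive on tensor products. -/
structure CondEntropy where
  H : ∀ (a b : ℕ), Matrix (Fin a × Fin b) (Fin a × Fin b) ℂ → ℝ
  nontrivial : ∃ (a b : ℕ) (ρ : Matrix (Fin a × Fin b) (Fin a × Fin b) ℂ),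
    IsState ρ ∧ H a b ρ ≠ 0
  mono : ∀ (a b a' b' : ℕ) (ρ : Matrix (Fin a × Fin b) (Fin a × Fin b) ℂ)
    (σ : Matrix (Fin a' × Fin b') (Fin a' × Fin b') ℂ),
    IsState ρ → IsState σ → CondMaj ρ σ → H a b ρ ≤ H a' b' σ
  additive : ∀ (a b a' b' : ℕ) (ρ : Matrix (Fin a × Fin b) (Fin a × Fin b) ℂ)
    (σ : Matrix (Fin a' × Fin b') (Fin a' × Fin b') ℂ),
    IsState ρ → IsState σ →
    H (a * a') (b * b') (tensorState ρ σ) = H a b ρ + H a' b' σ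

/-- A conditional entropy is normalized if `H(A|B) = 1` on `u⁽²⁾ ⊗ ρ_B`. -/
def CondEntropy.Normalized (E : CondEntropy) : Prop :=
  ∀ (b : ℕ) (ρB : Matrix (Fin b) (Fin b) ℂ), IsState ρB →
    E.H 2 b (unif 2 ⊗ₖ ρB) = 1

/-- A relaxed conditional entropy: as `CondEntropy`, but monotone under the relaxed
conditional majorization. -/
structure RelCondEntropy where
  H : ∀ (a b : ℕ), Matrix (Fin a × Fin b) (Fin a × Fin b) ℂ → ℝ
  nontrivial : ∃ (a b : ℕ) (ρ : Matrix (Fin a × Fin b) (Fin a × Fin b) ℂ),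
    IsState ρ ∧ H a b ρ ≠ 0
  mono : ∀ (a b a' b' : ℕ) (ρ : Matrix (Fin a × Fin b) (Fin a × Fin b) ℂ)
    (σ : Matrix (Fin a' × Fin b') (Fin a' × Fin b') ℂ),
    IsState ρ → IsState σ → RelCondMaj ρ σ → H a b ρ ≤ H a' b' σ
  additive : ∀ (a b a' b' : ℕ) (ρ : Matrix (Fin a × Fin b) (Fin a × Fin b) ℂ)
    (σ : Matrix (Fin a' × Fin b') (Fin a' × Fin b') ℂ),
    IsState ρ → IsState σ →
    H (a * a') (b * b') (tensorState ρ σ) = H a b ρ + H a' b' σ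

/-- A relaxed conditional entropy is normalized if `H(A|B) = 1` on `u⁽²⁾ ⊗ ρ_B`. -/
def RelCondEntropy.Normalized (E : RelCondEntropy) : Prop :=
  ∀ (b : ℕ) (ρB : Matrix (Fin b) (Fin b) ℂ), IsState ρB →
    E.H 2 b (unif 2 ⊗ₖ ρB) = 1

/-- An entropy: a real-valued function on all states of all finite dimensions that is
not identically zero, reverses majorization, and is additive on tensor products. -/
structure Entropy where
  H : ∀ (n : ℕ), Matrix (Fin n) (Fin n) ℂ → ℝ
  nontrivial : ∃ (n : ℕ) (ρ : Matrix (Fin n) (Fin n) ℂ), IsState ρ ∧ H n ρ ≠ 0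
  mono : ∀ (n n' : ℕ) (ρ : Matrix (Fin n) (Fin n) ℂ) (σ : Matrix (Fin n') (Fin n') ℂ),
    IsState ρ → IsState σ → Maj ρ σ → H n ρ ≤ H n' σ
  additive : ∀ (n n' : ℕ) (ρ : Matrix (Fin n) (Fin n) ℂ) (σ : Matrix (Fin n') (Fin n') ℂ),
    IsState ρ → IsState σ → H (n * n') (mreindex (ρ ⊗ₖ σ)) = H n ρ + H n' σ

/-- A relative entropy: an `[0,∞]`-valued function on pairs of states of equal dimension
that is not identically zero, monotone under quantum channels, and additive on
tensor products. -/
structure RelEntropy where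
  D : ∀ (n : ℕ), Matrix (Fin n) (Fin n) ℂ → Matrix (Fin n) (Fin n) ℂ → ℝ≥0∞
  nontrivial : ∃ (n : ℕ) (ρ σ : Matrix (Fin n) (Fin n) ℂ),
    IsState ρ ∧ IsState σ ∧ D n ρ σ ≠ 0
  mono : ∀ (n m : ℕ) (N : Matrix (Fin n) (Fin n) ℂ → Matrix (Fin m) (Fin m) ℂ),
    IsChannel N → ∀ ρ σ : Matrix (Fin n) (Fin n) ℂ,
      IsState ρ → IsState σ → D m (N ρ) (N σ) ≤ D n ρ σ
  additive : ∀ (n m : ℕ) (ρ σ : Matrix (Fin n) (Fin n) ℂ) (ω τ : Matrix (Fin m) (Fin m) ℂ),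
    IsState ρ → IsState σ → IsState ω → IsState τ →
    D (n * m) (mreindex (ρ ⊗ₖ ω)) (mreindex (σ ⊗ₖ τ)) = D n ρ σ + D m ω τ


/-- The conditional entropy `log₂|A| − 𝐃(ρ_{AB} ‖ u_A ⊗ ρ_B)` induced by a relative
entropy `𝐃`, valued in the extended reals. -/
def RelEntropy.condH (Dd : RelEntropy) (a b : ℕ)
    (ρ : Matrix (Fin a × Fin b) (Fin a × Fin b) ℂ) : EReal :=
  ((Real.logb 2 a : ℝ) : EReal) -
    ((Dd.D (a * b) (mreindex ρ) (mreindex (unif a ⊗ₖ trA ρ)) : ℝ≥0∞) : EReal)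


set_option linter.unusedSectionVars false

section Aux

variable {α β γ δ : Type} [Fintype α] [DecidableEq α] [Fintype β] [DecidableEq β]
  [Fintype γ] [DecidableEq γ] [Fintype δ] [DecidableEq δ]

lemma psd_add {M N : Matrix α α ℂ} (hM : M.PosSemidef) (hN : N.PosSemidef) :
    (M + N).PosSemidef :=
  hM.add hN

lemma psd_sum {ι : Type} [Fintype ι] (f : ι → Matrix α α ℂ)
    (h : ∀ i, (f i).PosSemidef) : (∑ i, f i).PosSemidef := by
  classical
  exact Finset.sum_induction f _ (fun a b ha hb => psd_add ha hb) Matrix.PosSemidef.zero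
    (fun i _ => h i)

lemma choiMatrix_apply (N : Matrix α α ℂ → Matrix β β ℂ) (i j : α) (p q : β) :
    choiMatrix N (i, p) (j, q) = N (Matrix.single i j 1) p q := by
  classical
  simp [choiMatrix, Matrix.sum_apply, Matrix.single, ite_and,
    Matrix.kroneckerMap_apply]

lemma map_eq_sum_basis (N : Matrix α α ℂ → Matrix β β ℂ) (hlin : IsLinearMap ℂ N)
    (X : Matrix α α ℂ) :
    N X = ∑ i, ∑ j, X i j • N (Matrix.single i j 1) := by
  have hsb : ∀ i j : α, Matrix.single i j (X i j)
      = X i j • Matrix.single i j (1 : ℂ) := fun i j => by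
    rw [Matrix.smul_single, smul_eq_mul, mul_one]
  conv_lhs => rw [Matrix.matrix_eq_sum_single X,
    show N = ⇑(IsLinearMap.mk' N hlin) from rfl]
  rw [map_sum]
  refine Finset.sum_congr rfl fun i _ => ?_
  rw [map_sum]
  exact Finset.sum_congr rfl fun j _ => by rw [hsb, LinearMap.map_smul]; rfl

lemma kraus_linear {ι : Type} [Fintype ι] (K : ι → Matrix β α ℂ) :
    IsLinearMap ℂ (fun X : Matrix α α ℂ => ∑ s, K s * X * (K s)ᴴ) := by
  constructor
  · intro X Y
    simp [Matrix.mul_add, Matrix.add_mul, Finset.sum_add_distrib]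
  · intro c X
    simp [Matrix.mul_smul, Matrix.smul_mul, Finset.smul_sum]

lemma mul_stdBasisMatrix_mul (A : Matrix β α ℂ) (B : Matrix α γ ℂ) (i j : α) (p : β) (q : γ) :
    (A * Matrix.single i j (1 : ℂ) * B) p q = A p i * B j q := by
  rw [Matrix.mul_assoc, Matrix.mul_apply]
  have : ∀ u, (Matrix.single i j (1 : ℂ) * B) u q
      = if i = u then B j q else 0 := by
    intro u
    rw [Matrix.mul_apply]
    simp [Matrix.single, ite_and]
  simp [this, mul_ite]

lemma exists_kraus (N : Matrix α α ℂ → Matrix β β ℂ) (hlin : IsLinearMap ℂ N)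
    (hchoi : (choiMatrix N).PosSemidef) :
    ∃ K : α × β → Matrix β α ℂ, ∀ X, N X = ∑ s, K s * X * (K s)ᴴ := by
  obtain ⟨C, hC⟩ : ∃ C : Matrix (α × β) (α × β) ℂ, choiMatrix N = Cᴴ * C := by
    open scoped MatrixOrder in exact CStarAlgebra.nonneg_iff_eq_star_mul_self.mp hchoi.nonneg
  set K : α × β → Matrix β α ℂ := fun s => Matrix.of fun p i => star (C s (i, p)) with hK
  refine ⟨K, fun X => ?_⟩
  have hbasis : ∀ i j : α, N (Matrix.single i j 1)
      = ∑ s, K s * (Matrix.single i j (1 : ℂ)) * (K s)ᴴ := by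
    intro i j
    ext p q
    have h1 : N (Matrix.single i j 1) p q
        = ∑ s : α × β, star (C s (i, p)) * C s (j, q) := by
      rw [← choiMatrix_apply N i j p q, hC, Matrix.mul_apply]
      simp [Matrix.conjTranspose_apply]
    rw [h1, Matrix.sum_apply]
    refine Finset.sum_congr rfl fun s _ => ?_
    rw [mul_stdBasisMatrix_mul]
    simp [hK, Matrix.conjTranspose_apply]
  have h2 : (∑ s, K s * X * (K s)ᴴ)
      = ∑ i, ∑ j, X i j • ∑ s, K s * (Matrix.single i j (1 : ℂ)) * (K s)ᴴ :=
    map_eq_sum_basis _ (kraus_linear K) X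
  rw [map_eq_sum_basis N hlin X, h2]
  exact Finset.sum_congr rfl fun i _ => Finset.sum_congr rfl fun j _ => by rw [hbasis]

lemma cp_psd (N : Matrix α α ℂ → Matrix β β ℂ) (hlin : IsLinearMap ℂ N)
    (hchoi : (choiMatrix N).PosSemidef) {X : Matrix α α ℂ} (hX : X.PosSemidef) :
    (N X).PosSemidef := by
  obtain ⟨K, hK⟩ := exists_kraus N hlin hchoi
  rw [hK]
  exact psd_sum _ fun s => hX.mul_mul_conjTranspose_same (K s)

lemma conjT_kron (A : Matrix α β ℂ) (B : Matrix γ δ ℂ) :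
    (A ⊗ₖ B)ᴴ = Aᴴ ⊗ₖ Bᴴ := by
  ext ⟨i, j⟩ ⟨k, l⟩
  simp [Matrix.conjTranspose_apply, Matrix.kroneckerMap_apply, star_mul', mul_comm]

lemma kron_psd {A : Matrix α α ℂ} {B : Matrix γ γ ℂ} (hA : A.PosSemidef)
    (hB : B.PosSemidef) : (A ⊗ₖ B).PosSemidef := by
  obtain ⟨P, rfl⟩ : ∃ P : Matrix α α ℂ, A = Pᴴ * P := by
    open scoped MatrixOrder in exact CStarAlgebra.nonneg_iff_eq_star_mul_self.mp hA.nonneg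
  obtain ⟨Q, rfl⟩ : ∃ Q : Matrix γ γ ℂ, B = Qᴴ * Q := by
    open scoped MatrixOrder in exact CStarAlgebra.nonneg_iff_eq_star_mul_self.mp hB.nonneg
  rw [Matrix.mul_kronecker_mul, ← conjT_kron]
  exact Matrix.posSemidef_conjTranspose_mul_self _

lemma diag_eq_sum (X : Matrix α α ℂ) (h : ∀ p q, p ≠ q → X p q = 0) :
    X = ∑ p, X p p • Matrix.single p p 1 := by
  ext a b
  simp only [Matrix.sum_apply, Matrix.smul_apply, Matrix.single, Matrix.of_apply,
    smul_eq_mul, mul_ite, mul_one, mul_zero]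
  rcases eq_or_ne a b with rfl | hab
  · rw [Finset.sum_eq_single a]
    · simp
    · intro p _ hp
      simp [fun h' : p = a => hp h']
    · intro hmem
      exact absurd (Finset.mem_univ a) hmem
  · rw [h a b hab]
    symm
    apply Finset.sum_eq_zero
    intro p _
    rcases eq_or_ne p a with rfl | hpa
    · simp [hab]
    · simp [fun h' : p = a => hpa h']

end Aux


section Aux2

variable {α β γ δ : Type} [Fintype α] [DecidableEq α] [Fintype β] [DecidableEq β]
  [Fintype γ] [DecidableEq γ] [Fintype δ] [DecidableEq δ]

lemma sum_kron {ι : Type} [Fintype ι] (f : ι → Matrix α β ℂ) (B : Matrix γ δ ℂ) :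
    (∑ i, f i) ⊗ₖ B = ∑ i, (f i) ⊗ₖ B := by
  ext ⟨a, b⟩ ⟨c, d⟩
  simp [Matrix.kroneckerMap_apply, Matrix.sum_apply, Finset.sum_mul]

lemma kron_sum {ι : Type} [Fintype ι] (A : Matrix α β ℂ) (f : ι → Matrix γ δ ℂ) :
    A ⊗ₖ (∑ i, f i) = ∑ i, A ⊗ₖ (f i) := by
  ext ⟨a, b⟩ ⟨c, d⟩
  simp [Matrix.kroneckerMap_apply, Matrix.sum_apply, Finset.mul_sum]

lemma stdBasis_kron (i j : α) (k l : β) :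
    (Matrix.single i j (1 : ℂ)) ⊗ₖ (Matrix.single k l (1 : ℂ))
      = Matrix.single (i, k) (j, l) (1 : ℂ) := by
  ext ⟨a, b⟩ ⟨c, d⟩
  simp only [Matrix.kroneckerMap_apply, Matrix.single, Matrix.of_apply,
    Prod.mk.injEq, ite_and]
  by_cases h1 : i = a <;> by_cases h2 : j = c <;> by_cases h3 : k = b <;>
    by_cases h4 : l = d <;> simp [h1, h2, h3, h4]

lemma choiMatrix_sum {ι : Type} [Fintype ι] (f : ι → (Matrix α α ℂ → Matrix β β ℂ)) :
    choiMatrix (fun X => ∑ j, f j X) = ∑ j, choiMatrix (f j) := by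
  ext ⟨i, p⟩ ⟨j, q⟩
  rw [choiMatrix_apply (fun X => ∑ j, f j X) i j p q, Matrix.sum_apply, Matrix.sum_apply]
  exact Finset.sum_congr rfl fun t _ => (choiMatrix_apply (f t) i j p q).symm

end Aux2

section Aux3

variable {m n n' b : ℕ}

lemma tensorMap_linear (M : Matrix (Fin m) (Fin m) ℂ → Matrix (Fin m) (Fin m) ℂ)
    (F : Matrix (Fin n) (Fin n) ℂ → Matrix (Fin n') (Fin n') ℂ) :
    IsLinearMap ℂ (tensorMap M F) := by
  constructor
  · intro X Y
    simp [tensorMap, Matrix.add_apply, add_smul, Finset.sum_add_distrib]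
  · intro c X
    simp [tensorMap, Matrix.smul_apply, smul_smul, Finset.smul_sum]

lemma stdBasis_prod_zero {k a : Fin m} {l bb : Fin n} {k' c : Fin m} {l' d : Fin n}
    (h : a ≠ k ∨ bb ≠ l ∨ c ≠ k' ∨ d ≠ l') :
    Matrix.single ((k, l) : Fin m × Fin n) (k', l') (1 : ℂ) (a, bb) (c, d) = 0 := by
  apply Matrix.single_apply_of_ne
  rintro ⟨h1, h2⟩
  rw [Prod.mk.injEq] at h1 h2
  rcases h with h | h | h | h
  exacts [h h1.1.symm, h h1.2.symm, h h2.1.symm, h h2.2.symm]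

lemma tensorMap_basis (M : Matrix (Fin m) (Fin m) ℂ → Matrix (Fin m) (Fin m) ℂ)
    (F : Matrix (Fin n) (Fin n) ℂ → Matrix (Fin n') (Fin n') ℂ)
    (k k' : Fin m) (l l' : Fin n) :
    tensorMap M F (Matrix.single ((k, l) : Fin m × Fin n) (k', l') 1)
      = M (Matrix.single k k' 1) ⊗ₖ F (Matrix.single l l' 1) := by
  unfold tensorMap
  rw [Finset.sum_eq_single k (fun x _ hx => by
        refine Finset.sum_eq_zero fun c _ => Finset.sum_eq_zero fun bb _ =>
          Finset.sum_eq_zero fun d _ => ?_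
        rw [stdBasis_prod_zero (Or.inl hx), zero_smul])
      (fun h => absurd (Finset.mem_univ k) h)]
  rw [Finset.sum_eq_single k' (fun x _ hx => by
        refine Finset.sum_eq_zero fun bb _ => Finset.sum_eq_zero fun d _ => ?_
        rw [stdBasis_prod_zero (Or.inr (Or.inr (Or.inl hx))), zero_smul])
      (fun h => absurd (Finset.mem_univ k') h)]
  rw [Finset.sum_eq_single l (fun x _ hx => by
        refine Finset.sum_eq_zero fun d _ => ?_
        rw [stdBasis_prod_zero (Or.inr (Or.inl hx)), zero_smul])
      (fun h => absurd (Finset.mem_univ l) h)]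
  rw [Finset.sum_eq_single l' (fun x _ hx => by
        rw [stdBasis_prod_zero (Or.inr (Or.inr (Or.inr hx))), zero_smul])
      (fun h => absurd (Finset.mem_univ l') h)]
  rw [Matrix.single_apply_same, one_smul]

lemma dsChannel_apply (D : Matrix (Fin m) (Fin m) ℝ) (X : Matrix (Fin m) (Fin m) ℂ)
    (a c : Fin m) :
    dsChannel D X a c = if a = c then ∑ x, ((D a x : ℝ) : ℂ) * X x x else 0 := by
  unfold dsChannel
  simp only [Matrix.sum_apply, Matrix.smul_apply, smul_eq_mul]
  have hE : ∀ x' : Fin m, Matrix.single x' x' (1 : ℂ) a c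
      = if x' = a ∧ a = c then 1 else 0 := by
    intro x'
    by_cases h1 : x' = a
    · subst h1
      by_cases h2 : x' = c
      · subst h2; simp
      · simp [Matrix.single_apply_of_ne (fun h => h2 h.2), h2]
    · simp [Matrix.single_apply_of_ne (fun h => h1 h.1.symm), h1]
  simp only [hE, mul_ite, mul_one, mul_zero]
  by_cases hac : a = c
  · simp [hac, Finset.sum_ite_eq']
  · simp [hac]

lemma dsChannel_linear (D : Matrix (Fin m) (Fin m) ℝ) : IsLinearMap ℂ (dsChannel D) := by
  constructor
  · intro X Y
    ext a c
    simp only [dsChannel_apply, Matrix.add_apply, mul_add, Finset.sum_add_distrib]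
    split_ifs <;> simp
  · intro c X
    ext a d
    simp only [dsChannel_apply, Matrix.smul_apply, smul_eq_mul]
    split_ifs with h
    · rw [Finset.mul_sum]
      exact Finset.sum_congr rfl fun x _ => by ring
    · simp

lemma dsChannel_basis_apply (D : Matrix (Fin m) (Fin m) ℝ) (k k' a c : Fin m) :
    dsChannel D (Matrix.single k k' 1) a c
      = if k = k' ∧ a = c then ((D a k : ℝ) : ℂ) else 0 := by
  rw [dsChannel_apply]
  have hin : (∑ x, ((D a x : ℝ) : ℂ) * Matrix.single k k' (1 : ℂ) x x)
      = if k = k' then ((D a k : ℝ) : ℂ) else 0 := by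
    rcases eq_or_ne k k' with rfl | hkk
    · rw [if_pos rfl, Finset.sum_eq_single k]
      · simp
      · intro x _ hx
        rw [Matrix.single_apply_of_ne (h := fun h => hx h.1.symm), mul_zero]
      · intro h; exact absurd (Finset.mem_univ k) h
    · rw [if_neg hkk]
      refine Finset.sum_eq_zero fun x _ => ?_
      rw [Matrix.single_apply_of_ne (h := fun h => hkk (h.1.trans h.2.symm)),
        mul_zero]
  rw [hin]
  by_cases h1 : k = k' <;> by_cases h2 : a = c <;> simp [h1, h2]

lemma choi_dsChannel_psd (D : Matrix (Fin m) (Fin m) ℝ) (hD : ∀ x x', 0 ≤ D x x') :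
    (choiMatrix (dsChannel D)).PosSemidef := by
  have hdiag : choiMatrix (dsChannel D)
      = Matrix.diagonal (fun s : Fin m × Fin m => ((D s.2 s.1 : ℝ) : ℂ)) := by
    ext ⟨x, p⟩ ⟨x', q⟩
    rw [choiMatrix_apply, dsChannel_basis_apply, Matrix.diagonal_apply]
    by_cases h1 : x = x' <;> by_cases h2 : p = q <;>
      simp [h1, h2, Prod.ext_iff]
  rw [hdiag]
  exact Matrix.PosSemidef.diagonal fun s => Complex.zero_le_real.mpr (hD _ _)

lemma dsChannel_unif (D : Matrix (Fin m) (Fin m) ℝ) (hD : IsDoublyStochastic D) :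
    dsChannel D (unif m) = unif m := by
  ext a c
  rw [dsChannel_apply]
  rcases eq_or_ne a c with rfl | hac
  · have : ∀ x, ((D a x : ℝ) : ℂ) * unif m x x = ((D a x : ℝ) : ℂ) * (m : ℂ)⁻¹ := by
      intro x; simp [unif, Matrix.one_apply]
    rw [if_pos rfl]
    simp only [this]
    rw [← Finset.sum_mul]
    have hsum : (∑ x, ((D a x : ℝ) : ℂ)) = 1 := by
      rw [← Complex.ofReal_sum, hD.2.1 a, Complex.ofReal_one]
    rw [hsum, one_mul]
    simp [unif, Matrix.one_apply]
  · rw [if_neg hac]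
    simp [unif, Matrix.one_apply, hac]

end Aux3


section Aux4

variable {m n n' b : ℕ}

lemma trA_apply {a b : ℕ} (Z : Matrix (Fin a × Fin b) (Fin a × Fin b) ℂ) (r r' : Fin b) :
    trA Z r r' = ∑ x, Z (x, r) (x, r') := rfl

lemma trace_stdBasis {α : Type} [Fintype α] [DecidableEq α] (i j : α) :
    (Matrix.single i j (1 : ℂ)).trace = if i = j then 1 else 0 := by
  rw [Matrix.trace]
  rcases eq_or_ne i j with rfl | hij
  · rw [if_pos rfl, Finset.sum_eq_single i]
    · simp [Matrix.diag]
    · intro x _ hx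
      simp [Matrix.diag, Matrix.single_apply_of_ne (c := (1 : ℂ)) (h := fun h => hx h.1.symm)]
    · intro h; exact absurd (Finset.mem_univ i) h
  · rw [if_neg hij]
    refine Finset.sum_eq_zero fun x _ => ?_
    simp [Matrix.diag, Matrix.single_apply_of_ne
      (c := (1 : ℂ)) (h := fun h => hij (h.1.trans h.2.symm))]

lemma tensorMap_kron (M : Matrix (Fin m) (Fin m) ℂ → Matrix (Fin m) (Fin m) ℂ)
    (F : Matrix (Fin n) (Fin n) ℂ → Matrix (Fin n') (Fin n') ℂ)
    (hM : IsLinearMap ℂ M) (hF : IsLinearMap ℂ F)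
    (A : Matrix (Fin m) (Fin m) ℂ) (B : Matrix (Fin n) (Fin n) ℂ) :
    tensorMap M F (A ⊗ₖ B) = M A ⊗ₖ F B := by
  conv_rhs => rw [map_eq_sum_basis M hM A, map_eq_sum_basis F hF B]
  rw [sum_kron]
  unfold tensorMap
  refine Finset.sum_congr rfl fun k _ => ?_
  rw [sum_kron]
  refine Finset.sum_congr rfl fun k' _ => ?_
  rw [Matrix.smul_kronecker, kron_sum, Finset.smul_sum]
  refine Finset.sum_congr rfl fun l _ => ?_
  rw [kron_sum, Finset.smul_sum]
  refine Finset.sum_congr rfl fun l' _ => ?_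
  rw [Matrix.kronecker_smul, smul_smul]
  rfl

lemma trace_dsChannel_basis (D : Matrix (Fin m) (Fin m) ℝ)
    (hD3 : ∀ k, ∑ x, D x k = 1) (k k' : Fin m) :
    (dsChannel D (Matrix.single k k' 1)).trace = if k = k' then 1 else 0 := by
  rw [Matrix.trace]
  simp only [Matrix.diag_apply, dsChannel_basis_apply, and_true]
  rcases eq_or_ne k k' with rfl | hkk
  · simp [← Complex.ofReal_sum, hD3 k]
  · simp [hkk]

lemma kron_one_mul_entry (W : Matrix (Fin m) (Fin m) ℂ)
    (Z : Matrix (Fin m × Fin b) (Fin m × Fin b) ℂ) (x : Fin m) (y : Fin b)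
    (x' : Fin m) (y' : Fin b) :
    ((W ⊗ₖ (1 : Matrix (Fin b) (Fin b) ℂ)) * Z
        * (W ⊗ₖ (1 : Matrix (Fin b) (Fin b) ℂ))ᴴ) (x, y) (x', y')
      = ∑ a, ∑ c, W x a * Z (a, y) (c, y') * star (W x' c) := by
  have h1 : ∀ v, ((W ⊗ₖ (1 : Matrix (Fin b) (Fin b) ℂ)) * Z) (x, y) v
      = ∑ a, W x a * Z (a, y) v := by
    intro v
    rw [Matrix.mul_apply, Fintype.sum_prod_type]
    refine Finset.sum_congr rfl fun a _ => ?_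
    rw [Finset.sum_eq_single y]
    · simp [Matrix.kroneckerMap_apply, Matrix.one_apply]
    · intro r _ hr
      simp [Matrix.kroneckerMap_apply, Matrix.one_apply, Ne.symm hr]
    · intro h; exact absurd (Finset.mem_univ y) h
  rw [Matrix.mul_apply, Fintype.sum_prod_type]
  have h2 : ∀ c r', (W ⊗ₖ (1 : Matrix (Fin b) (Fin b) ℂ))ᴴ (c, r') (x', y')
      = star (W x' c) * (if y' = r' then 1 else 0) := by
    intro c r'
    rcases eq_or_ne y' r' with rfl | h
    · simp [Matrix.conjTranspose_apply, Matrix.kroneckerMap_apply, Matrix.one_apply, star_mul']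
    · simp [Matrix.conjTranspose_apply, Matrix.kroneckerMap_apply, Matrix.one_apply,
        star_mul', h, Ne.symm h]
  calc (∑ c, ∑ r', ((W ⊗ₖ (1 : Matrix (Fin b) (Fin b) ℂ)) * Z) (x, y) (c, r')
        * (W ⊗ₖ (1 : Matrix (Fin b) (Fin b) ℂ))ᴴ (c, r') (x', y'))
      = ∑ c, ((W ⊗ₖ (1 : Matrix (Fin b) (Fin b) ℂ)) * Z) (x, y) (c, y') * star (W x' c) := by
        refine Finset.sum_congr rfl fun c _ => ?_
        rw [Finset.sum_eq_single y']
        · rw [h2]; simp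
        · intro r' _ hr'
          rw [h2]; simp [Ne.symm hr']
        · intro h; exact absurd (Finset.mem_univ y') h
    _ = ∑ c, ∑ a, W x a * Z (a, y) (c, y') * star (W x' c) := by
        refine Finset.sum_congr rfl fun c _ => ?_
        rw [h1, Finset.sum_mul]
    _ = ∑ a, ∑ c, W x a * Z (a, y) (c, y') * star (W x' c) := Finset.sum_comm

lemma trA_conj (W : Matrix (Fin m) (Fin m) ℂ) (hW : Wᴴ * W = 1)
    (Z : Matrix (Fin m × Fin b) (Fin m × Fin b) ℂ) :
    trA ((W ⊗ₖ (1 : Matrix (Fin b) (Fin b) ℂ)) * Z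
      * (W ⊗ₖ (1 : Matrix (Fin b) (Fin b) ℂ))ᴴ) = trA Z := by
  ext y y'
  rw [trA_apply, trA_apply]
  simp only [kron_one_mul_entry]
  rw [Finset.sum_comm]
  refine Finset.sum_congr rfl fun a _ => ?_
  rw [Finset.sum_comm]
  have hx : ∀ c, ∑ x, W x a * Z (a, y) (c, y') * star (W x c)
      = Z (a, y) (c, y') * (1 : Matrix (Fin m) (Fin m) ℂ) c a := by
    intro c
    rw [← hW, Matrix.mul_apply, Finset.mul_sum]
    exact Finset.sum_congr rfl fun x _ => by
      rw [Matrix.conjTranspose_apply]; ring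
  simp only [hx, Matrix.one_apply, mul_ite, mul_one, mul_zero]
  rw [Finset.sum_ite_eq' Finset.univ a]
  simp

lemma trace_conj (W : Matrix (Fin m) (Fin m) ℂ) (hW : Wᴴ * W = 1)
    (Z : Matrix (Fin m × Fin b) (Fin m × Fin b) ℂ) :
    ((W ⊗ₖ (1 : Matrix (Fin b) (Fin b) ℂ)) * Z
      * (W ⊗ₖ (1 : Matrix (Fin b) (Fin b) ℂ))ᴴ).trace = Z.trace := by
  rw [Matrix.trace_mul_comm, ← Matrix.mul_assoc, conjT_kron, Matrix.conjTranspose_one,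
    ← Matrix.mul_kronecker_mul, hW, Matrix.one_mul, Matrix.one_kronecker_one, Matrix.one_mul]

lemma conj_unif_kron (W : Matrix (Fin m) (Fin m) ℂ) (hWW : W * Wᴴ = 1)
    (τ : Matrix (Fin b) (Fin b) ℂ) :
    (W ⊗ₖ (1 : Matrix (Fin b) (Fin b) ℂ)) * ((unif m) ⊗ₖ τ)
      * (W ⊗ₖ (1 : Matrix (Fin b) (Fin b) ℂ))ᴴ = (unif m) ⊗ₖ τ := by
  rw [conjT_kron, Matrix.conjTranspose_one, ← Matrix.mul_kronecker_mul,
    ← Matrix.mul_kronecker_mul]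
  have h1 : W * unif m * Wᴴ = unif m := by
    unfold unif
    rw [Matrix.mul_smul, Matrix.mul_one, Matrix.smul_mul, hWW]
  have h2 : (1 : Matrix (Fin b) (Fin b) ℂ) * τ * 1 = τ := by
    rw [Matrix.one_mul, Matrix.mul_one]
  rw [h1, h2]

lemma repl_channel (x0 : Fin m) :
    IsChannel (fun Z : Matrix (Fin m) (Fin m) ℂ => Z.trace • Matrix.single x0 x0 1) := by
  refine ⟨⟨fun X Y => by rw [Matrix.trace_add, add_smul],
    fun c X => by rw [Matrix.trace_smul, smul_assoc]⟩,
    fun X => by rw [Matrix.trace_smul, smul_eq_mul, trace_stdBasis, if_pos rfl, mul_one], ?_⟩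
  set B : Matrix (Fin m) (Fin m × Fin m) ℂ :=
    Matrix.of fun a s => if a = s.1 ∧ s.2 = x0 then 1 else 0 with hB
  have hchoi : choiMatrix (fun Z : Matrix (Fin m) (Fin m) ℂ =>
      Z.trace • Matrix.single x0 x0 1) = Bᴴ * B := by
    ext ⟨i, p⟩ ⟨j, q⟩
    rw [choiMatrix_apply, Matrix.mul_apply]
    simp only [Matrix.conjTranspose_apply]
    have hBapp : ∀ (a : Fin m) (i p : Fin m), B a (i, p) = if a = i ∧ p = x0 then 1 else 0 :=
      fun _ _ _ => rfl
    have hR : ∀ a : Fin m, star (B a (i, p)) * B a (j, q)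
        = if a = i then (if i = j ∧ p = x0 ∧ q = x0 then (1 : ℂ) else 0) else 0 := by
      intro a
      rw [hBapp, hBapp]
      by_cases ha1 : a = i <;> by_cases ha2 : a = j <;> by_cases hp : p = x0 <;>
        by_cases hq : q = x0 <;> simp_all
    simp only [hR]
    rw [Finset.sum_ite_eq' Finset.univ i]
    simp only [Finset.mem_univ, if_true, Matrix.smul_apply, smul_eq_mul, trace_stdBasis]
    by_cases h1 : i = j <;> by_cases h2 : p = x0 <;> by_cases h3 : q = x0 <;>
      simp_all [Matrix.single, ite_and, eq_comm]
  rw [hchoi]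
  exact Matrix.posSemidef_conjTranspose_mul_self _

lemma stdBasis_state {α : Type} [Fintype α] [DecidableEq α] (y : α) :
    IsState (Matrix.single y y (1 : ℂ)) := by
  constructor
  · have hd : Matrix.single y y (1 : ℂ) = Matrix.diagonal (Pi.single y 1) := by
      ext a c
      rcases eq_or_ne a c with rfl | hac
      · rw [Matrix.diagonal_apply_eq]
        simp [Matrix.single, Pi.single_apply, eq_comm]
      · rw [Matrix.diagonal_apply_ne _ hac]
        exact Matrix.single_apply_of_ne
          (c := (1 : ℂ)) (h := fun h => hac (h.1.symm.trans h.2))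
    rw [hd]
    refine Matrix.PosSemidef.diagonal fun i => ?_
    rcases eq_or_ne i y with rfl | h
    · simp
    · simp [Pi.single_apply, h]
  · rw [trace_stdBasis, if_pos rfl]

lemma tensorIdRight_repl (x0 x : Fin m) (y : Fin n) :
    tensorIdRight n (fun Z : Matrix (Fin m) (Fin m) ℂ => Z.trace • Matrix.single x0 x0 1)
        (Matrix.single ((x, y) : Fin m × Fin n) (x, y) 1)
      = Matrix.single ((x0, y) : Fin m × Fin n) (x0, y) 1 := by
  ext ⟨a, r⟩ ⟨c, r'⟩
  unfold tensorIdRight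
  simp only [Matrix.of_apply, Matrix.smul_apply, smul_eq_mul]
  have htr : (Matrix.of fun k k' => Matrix.single ((x, y) : Fin m × Fin n) (x, y)
      (1 : ℂ) (k, r) (k', r')).trace = if y = r ∧ y = r' then 1 else 0 := by
    rw [Matrix.trace]
    simp only [Matrix.diag_apply, Matrix.of_apply, Matrix.single, Prod.mk.injEq]
    by_cases h1 : y = r <;> by_cases h2 : y = r' <;>
      simp [h1, h2, ite_and, Finset.sum_ite_eq, eq_comm]
  rw [htr]
  simp only [Matrix.single, Matrix.of_apply, Prod.mk.injEq]
  by_cases h1 : y = r <;> by_cases h2 : y = r' <;> by_cases h3 : x0 = a <;>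
    by_cases h4 : x0 = c <;> simp_all [ite_and]

lemma unif_kron_basis (y : Fin n) :
    (unif m) ⊗ₖ (Matrix.single y y (1 : ℂ))
      = (m : ℂ)⁻¹ • ∑ x : Fin m, Matrix.single ((x, y) : Fin m × Fin n) (x, y) 1 := by
  ext ⟨a, r⟩ ⟨c, r'⟩
  simp only [Matrix.kroneckerMap_apply, unif, Matrix.smul_apply, Matrix.sum_apply,
    Matrix.one_apply, Matrix.single, Matrix.of_apply, smul_eq_mul, Prod.mk.injEq]
  by_cases h1 : a = c <;> by_cases h2 : y = r <;> by_cases h3 : y = r' <;>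
    simp [h1, h2, h3, ite_and, Finset.sum_ite_eq, eq_comm, Finset.mul_sum]

end Aux4


section Aux5

variable {m n n' b : ℕ}

lemma sum_comm3 {M : Type} [AddCommMonoid M] {a b c : Type} [Fintype a] [Fintype b] [Fintype c]
    (f : a → b → c → M) :
    ∑ x : a, ∑ y : b, ∑ z : c, f x y z = ∑ y : b, ∑ z : c, ∑ x : a, f x y z := by
  rw [Finset.sum_comm]
  exact Finset.sum_congr rfl fun y _ => Finset.sum_comm

lemma psd_diag_nonneg {α : Type} [Fintype α] [DecidableEq α] {M : Matrix α α ℂ}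
    (h : M.PosSemidef) (i : α) : 0 ≤ M i i := by
  exact h.diag_nonneg

lemma trA_sum {a b : ℕ} {ι : Type} [Fintype ι]
    (f : ι → Matrix (Fin a × Fin b) (Fin a × Fin b) ℂ) :
    trA (∑ j, f j) = ∑ j, trA (f j) := by
  ext r r'
  rw [trA_apply]
  simp only [Matrix.sum_apply]
  rw [Finset.sum_comm]
  exact Finset.sum_congr rfl fun j _ => (trA_apply (f j) r r').symm

lemma trA_tensorIdRight (M : Matrix (Fin m) (Fin m) ℂ → Matrix (Fin m) (Fin m) ℂ)
    (hM : ∀ Z, (M Z).trace = Z.trace) (X : Matrix (Fin m × Fin b) (Fin m × Fin b) ℂ) :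
    trA (tensorIdRight b M X) = trA X := by
  ext l l'
  rw [trA_apply, trA_apply]
  have h := hM (Matrix.of fun k k' => X (k, l) (k', l'))
  simp only [Matrix.trace, Matrix.diag_apply, Matrix.of_apply] at h
  exact h

lemma choi_tensorMap_psd (D : Matrix (Fin m) (Fin m) ℝ) (hD : ∀ x x', 0 ≤ D x x')
    (F : Matrix (Fin n) (Fin n) ℂ → Matrix (Fin n') (Fin n') ℂ)
    (hFchoi : (choiMatrix F).PosSemidef) :
    (choiMatrix (tensorMap (dsChannel D) F)).PosSemidef := by
  have heq : choiMatrix (tensorMap (dsChannel D) F)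
      = (choiMatrix (dsChannel D) ⊗ₖ choiMatrix F).submatrix
          (fun s : (Fin m × Fin n) × (Fin m × Fin n') => ((s.1.1, s.2.1), (s.1.2, s.2.2)))
          (fun s : (Fin m × Fin n) × (Fin m × Fin n') => ((s.1.1, s.2.1), (s.1.2, s.2.2))) := by
    ext ⟨⟨k, l⟩, ⟨p, r⟩⟩ ⟨⟨k', l'⟩, ⟨p', r'⟩⟩
    rw [choiMatrix_apply, tensorMap_basis, Matrix.submatrix_apply]
    rw [Matrix.kroneckerMap_apply, Matrix.kroneckerMap_apply, choiMatrix_apply,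
      choiMatrix_apply]
  rw [heq]
  exact (kron_psd (choi_dsChannel_psd D hD) hFchoi).submatrix _

lemma trA_tensorMap (D : Matrix (Fin m) (Fin m) ℝ) (hD3 : ∀ k, ∑ x, D x k = 1)
    (F : Matrix (Fin n) (Fin n) ℂ → Matrix (Fin n') (Fin n') ℂ) (hF : IsLinearMap ℂ F)
    (Y : Matrix (Fin m × Fin n) (Fin m × Fin n) ℂ) :
    trA (tensorMap (dsChannel D) F Y) = F (trA Y) := by
  rw [map_eq_sum_basis F hF (trA Y)]
  ext r r'
  rw [trA_apply]
  have hterm : ∀ x : Fin m, tensorMap (dsChannel D) F Y (x, r) (x, r')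
      = ∑ k, ∑ k', ∑ l, ∑ l', Y (k, l) (k', l')
          * ((if k = k' then ((D x k : ℝ) : ℂ) else 0)
              * F (Matrix.single l l' 1) r r') := by
    intro x
    show (∑ k, ∑ k', ∑ l, ∑ l', Y (k, l) (k', l') •
        (dsChannel D (Matrix.single k k' 1) ⊗ₖ F (Matrix.single l l' 1)))
        (x, r) (x, r') = _
    simp only [Matrix.sum_apply, Matrix.smul_apply, Matrix.kroneckerMap_apply, smul_eq_mul,
      dsChannel_basis_apply, and_true]
  simp only [hterm]
  have hstep : ∀ x k k', (∑ l, ∑ l', Y (k, l) (k', l')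
        * ((if k = k' then ((D x k : ℝ) : ℂ) else 0) * F (Matrix.single l l' 1) r r'))
      = if k = k' then ∑ l, ∑ l', Y (k, l) (k, l')
          * (((D x k : ℝ) : ℂ) * F (Matrix.single l l' 1) r r') else 0 := by
    intro x k k'
    rcases eq_or_ne k k' with rfl | hkk
    · simp
    · simp [hkk]
  simp only [hstep]
  rw [Finset.sum_comm]
  have hcol : ∀ k : Fin m, (∑ x : Fin m, ∑ k' : Fin m, if k = k' then
        ∑ l, ∑ l', Y (k, l) (k, l') * (((D x k : ℝ) : ℂ)
          * F (Matrix.single l l' 1) r r') else 0)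
      = ∑ l, ∑ l', Y (k, l) (k, l') * F (Matrix.single l l' 1) r r' := by
    intro k
    have h1 : ∀ x : Fin m, (∑ k' : Fin m, if k = k' then
          ∑ l, ∑ l', Y (k, l) (k, l') * (((D x k : ℝ) : ℂ)
            * F (Matrix.single l l' 1) r r') else 0)
        = ∑ l, ∑ l', Y (k, l) (k, l') * (((D x k : ℝ) : ℂ)
            * F (Matrix.single l l' 1) r r') := by
      intro x
      rw [Finset.sum_eq_single k]
      · rw [if_pos rfl]
      · intro k' _ hk'; rw [if_neg (Ne.symm hk')]
      · intro h; exact absurd (Finset.mem_univ k) h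
    simp only [h1]
    rw [sum_comm3]
    refine Finset.sum_congr rfl fun l _ => ?_
    refine Finset.sum_congr rfl fun l' _ => ?_
    calc ∑ x : Fin m, Y (k, l) (k, l') * (((D x k : ℝ) : ℂ)
            * F (Matrix.single l l' 1) r r')
        = (∑ x : Fin m, ((D x k : ℝ) : ℂ))
            * (Y (k, l) (k, l') * F (Matrix.single l l' 1) r r') := by
          rw [Finset.sum_mul]
          exact Finset.sum_congr rfl fun x _ => by ring
      _ = Y (k, l) (k, l') * F (Matrix.single l l' 1) r r' := by
          rw [← Complex.ofReal_sum, hD3 k, Complex.ofReal_one, one_mul]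
  simp only [hcol]
  rw [Matrix.sum_apply]
  rw [Finset.sum_comm]
  refine Finset.sum_congr rfl fun l _ => ?_
  rw [Matrix.sum_apply]
  rw [Finset.sum_comm]
  refine Finset.sum_congr rfl fun l' _ => ?_
  rw [Matrix.smul_apply, smul_eq_mul, trA_apply, Finset.sum_mul]

end Aux5


section Aux6

variable {m n n' : ℕ}

lemma isLinearMap_sum {α β : Type} [Fintype α] [Fintype β] {ι : Type} [Fintype ι]
    (f : ι → (Matrix α α ℂ → Matrix β β ℂ)) (h : ∀ j, IsLinearMap ℂ (f j)) :
    IsLinearMap ℂ (fun X => ∑ j, f j X) :=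
  ⟨fun a b => by simp only [fun j => (h j).map_add a b, Finset.sum_add_distrib],
   fun c a => by simp only [fun j => (h j).map_smul c a, Finset.smul_sum]⟩

lemma trace_tensorMap (D : Matrix (Fin m) (Fin m) ℝ) (hD3 : ∀ k, ∑ x, D x k = 1)
    (F : Matrix (Fin n) (Fin n) ℂ → Matrix (Fin n') (Fin n') ℂ)
    (X : Matrix (Fin m × Fin n) (Fin m × Fin n) ℂ) :
    (tensorMap (dsChannel D) F X).trace
      = ∑ l, ∑ l', (∑ kk, X (kk, l) (kk, l'))
          * (F (Matrix.single l l' 1)).trace := by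
  unfold tensorMap
  rw [Matrix.trace_sum]
  simp only [Matrix.trace_sum, Matrix.trace_smul, Matrix.trace_kronecker, smul_eq_mul,
    trace_dsChannel_basis D hD3]
  have hstep : ∀ k k' : Fin m, (∑ l, ∑ l', X ((k, l) : Fin m × Fin n) (k', l')
        * ((if k = k' then (1 : ℂ) else 0) * (F (Matrix.single l l' 1)).trace))
      = if k = k' then ∑ l, ∑ l', X (k, l) (k, l')
          * (F (Matrix.single l l' 1)).trace else 0 := by
    intro k k'
    rcases eq_or_ne k k' with rfl | h
    · simp
    · simp [h]
  simp only [hstep]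
  have hk : ∀ k : Fin m, (∑ k', if k = k' then
        ∑ l, ∑ l', X (k, l) (k, l') * (F (Matrix.single l l' 1)).trace else 0)
      = ∑ l, ∑ l', X (k, l) (k, l') * (F (Matrix.single l l' 1)).trace := by
    intro k
    rw [Finset.sum_eq_single k]
    · rw [if_pos rfl]
    · intro k' _ h; rw [if_neg (Ne.symm h)]
    · intro h; exact absurd (Finset.mem_univ k) h
  simp only [hk]
  rw [sum_comm3]
  refine Finset.sum_congr rfl fun l _ => Finset.sum_congr rfl fun l' _ => ?_
  rw [Finset.sum_mul]

lemma trace_sumtensor (k : ℕ) (D : Fin k → Matrix (Fin m) (Fin m) ℝ)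
    (hD : ∀ j, IsDoublyStochastic (D j))
    (F : Fin k → (Matrix (Fin n) (Fin n) ℂ → Matrix (Fin n') (Fin n') ℂ))
    (hFtr : ∀ X : Matrix (Fin n) (Fin n) ℂ, (∑ j, F j X).trace = X.trace)
    (X : Matrix (Fin m × Fin n) (Fin m × Fin n) ℂ) :
    (∑ j, tensorMap (dsChannel (D j)) (F j) X).trace = X.trace := by
  rw [Matrix.trace_sum]
  rw [Finset.sum_congr rfl (fun j _ => trace_tensorMap (D j) (hD j).2.2 (F j) X)]
  rw [sum_comm3]
  have h1 : ∀ (l : Fin n) (l' : Fin n), (∑ j, (∑ kk, X (kk, l) (kk, l'))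
        * (F j (Matrix.single l l' 1)).trace)
      = (∑ kk, X (kk, l) (kk, l')) * (if l = l' then (1 : ℂ) else 0) := by
    intro l l'
    rw [← Finset.mul_sum, ← Matrix.trace_sum, hFtr, trace_stdBasis]
  rw [Finset.sum_congr rfl (fun l _ => Finset.sum_congr rfl (fun l' _ => h1 l l'))]
  have h2 : ∀ l : Fin n, (∑ l', (∑ kk, X (kk, l) (kk, l'))
        * (if l = l' then (1 : ℂ) else 0)) = ∑ kk, X (kk, l) (kk, l) := by
    intro l
    rw [Finset.sum_eq_single l]
    · simp
    · intro l' _ h; simp [Ne.symm h]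
    · intro h; exact absurd (Finset.mem_univ l) h
  rw [Finset.sum_congr rfl (fun l _ => h2 l)]
  rw [Matrix.trace, Fintype.sum_prod_type, Finset.sum_comm]
  rfl

lemma condMaj_unitary {ρ : Matrix (Fin m × Fin n) (Fin m × Fin n) ℂ}
    {σ : Matrix (Fin m × Fin n') (Fin m × Fin n') ℂ} (h : CondMaj ρ σ) :
    ∃ (W : Matrix (Fin m) (Fin m) ℂ)
      (N : Matrix (Fin m × Fin n) (Fin m × Fin n) ℂ →
           Matrix (Fin m × Fin n') (Fin m × Fin n') ℂ),
      Wᴴ * W = 1 ∧ LocallyBalanced N ∧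
      σ = (W ⊗ₖ (1 : Matrix (Fin n') (Fin n') ℂ)) * N ρ
            * (W ⊗ₖ (1 : Matrix (Fin n') (Fin n') ℂ))ᴴ := by
  rcases h with ⟨-, V, N, hV, hN, hσ⟩ | ⟨-, U, N, hU, hN, hσ⟩
  · exact ⟨V, N, hV, hN, hσ⟩
  · refine ⟨Uᴴ, N, by
      rw [Matrix.conjTranspose_conjTranspose]
      exact mul_eq_one_comm.mp hU, hN, ?_⟩
    rw [← hσ]
    have e1 : (Uᴴ ⊗ₖ (1 : Matrix (Fin n') (Fin n') ℂ))
        * (U ⊗ₖ (1 : Matrix (Fin n') (Fin n') ℂ)) = 1 := by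
      rw [← Matrix.mul_kronecker_mul, hU, Matrix.one_mul, Matrix.one_kronecker_one]
    have e2 : (U ⊗ₖ (1 : Matrix (Fin n') (Fin n') ℂ))ᴴ
        * (Uᴴ ⊗ₖ (1 : Matrix (Fin n') (Fin n') ℂ))ᴴ = 1 := by
      rw [← Matrix.conjTranspose_mul, e1, Matrix.conjTranspose_one]
    have hassoc : (Uᴴ ⊗ₖ (1 : Matrix (Fin n') (Fin n') ℂ))
          * ((U ⊗ₖ (1 : Matrix (Fin n') (Fin n') ℂ)) * σ
              * (U ⊗ₖ (1 : Matrix (Fin n') (Fin n') ℂ))ᴴ)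
          * (Uᴴ ⊗ₖ (1 : Matrix (Fin n') (Fin n') ℂ))ᴴ
        = ((Uᴴ ⊗ₖ (1 : Matrix (Fin n') (Fin n') ℂ))
            * (U ⊗ₖ (1 : Matrix (Fin n') (Fin n') ℂ))) * σ
          * ((U ⊗ₖ (1 : Matrix (Fin n') (Fin n') ℂ))ᴴ
            * (Uᴴ ⊗ₖ (1 : Matrix (Fin n') (Fin n') ℂ))ᴴ) := by
      simp only [Matrix.mul_assoc]
    rw [hassoc, e1, e2, Matrix.one_mul, Matrix.mul_one]

end Aux6


section Forward

lemma condMaj_to_cds {m n n' : ℕ}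
    (ρ : Matrix (Fin m × Fin n) (Fin m × Fin n) ℂ)
    (σ : Matrix (Fin m × Fin n') (Fin m × Fin n') ℂ)
    (hρ : IsState ρ) (hσ : IsState σ)
    (hρdiag : ∀ p q, p ≠ q → ρ p q = 0) (hσdiag : ∀ p q, p ≠ q → σ p q = 0)
    (hmaj : CondMaj ρ σ) :
    ∃ (k : ℕ) (D : Fin k → Matrix (Fin m) (Fin m) ℝ)
      (F : Fin k → (Matrix (Fin n) (Fin n) ℂ → Matrix (Fin n') (Fin n') ℂ)),
      (∀ j, IsDoublyStochastic (D j)) ∧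
      (∀ j, IsLinearMap ℂ (F j)) ∧
      (∀ j, (choiMatrix (F j)).PosSemidef) ∧
      (∀ X : Matrix (Fin n) (Fin n) ℂ, (∑ j, F j X).trace = X.trace) ∧
      σ = ∑ j, tensorMap (dsChannel (D j)) (F j) ρ := by
  classical
  have hm : 0 < m := by
    rcases Nat.eq_zero_or_pos m with rfl | h
    · exact absurd hρ.2 (by simp [Matrix.trace])
    · exact h
  set x0 : Fin m := ⟨0, hm⟩ with hx0
  obtain ⟨W, N, hW, hNlb, hσW⟩ := condMaj_unitary hmaj
  have hWW : W * Wᴴ = 1 := mul_eq_one_comm.mp hW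
  obtain ⟨hNch, hNcu, hNsc⟩ := hNlb
  obtain ⟨hNlin, hNtr, hNchoi⟩ := hNch
  set G : Matrix (Fin m × Fin n) (Fin m × Fin n) ℂ →
      Matrix (Fin m × Fin n') (Fin m × Fin n') ℂ :=
    fun X => (W ⊗ₖ (1 : Matrix (Fin n') (Fin n') ℂ)) * N X
      * (W ⊗ₖ (1 : Matrix (Fin n') (Fin n') ℂ))ᴴ with hG
  have hGlin : IsLinearMap ℂ G := by
    constructor
    · intro X Y
      simp only [hG, hNlin.map_add, Matrix.add_mul, Matrix.mul_add]
    · intro c X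
      simp only [hG, hNlin.map_smul, Matrix.smul_mul, Matrix.mul_smul]
  set Pc : (Fin m × Fin n') → (Fin m × Fin n) → ℂ :=
    fun p' p => G (Matrix.single p p 1) p' p' with hPcdef
  have hGpsd : ∀ p : Fin m × Fin n, (G (Matrix.single p p 1)).PosSemidef := fun p =>
    (cp_psd N hNlin hNchoi (stdBasis_state p).1).mul_mul_conjTranspose_same _
  have hPc_nonneg : ∀ p' p, 0 ≤ Pc p' p := fun p' p => psd_diag_nonneg (hGpsd p) p'
  set P : (Fin m × Fin n') → (Fin m × Fin n) → ℝ := fun p' p => (Pc p' p).re with hPdef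
  have hPnn : ∀ p' p, 0 ≤ P p' p := fun p' p => ((Complex.nonneg_iff).mp (hPc_nonneg p' p)).1
  have hPc_real : ∀ p' p, Pc p' p = ((P p' p : ℝ) : ℂ) := by
    intro p' p
    have h := (Complex.nonneg_iff).mp (hPc_nonneg p' p)
    exact Complex.ext (by simp [hPdef]) (by simp [← h.2])
  -- diagonal values of σ
  have hσdiagval : ∀ p', σ p' p' = ∑ p, ρ p p * Pc p' p := by
    intro p'
    have h2 : G ρ = ∑ p, ρ p p • G (Matrix.single p p 1) := by
      conv_lhs => rw [diag_eq_sum ρ hρdiag,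
        show G = ⇑(IsLinearMap.mk' G hGlin) from rfl]
      rw [map_sum]
      exact Finset.sum_congr rfl fun p _ => by rw [LinearMap.map_smul]; rfl
    rw [hσW, show (W ⊗ₖ (1 : Matrix (Fin n') (Fin n') ℂ)) * N ρ
      * (W ⊗ₖ (1 : Matrix (Fin n') (Fin n') ℂ))ᴴ = G ρ from rfl, h2, Matrix.sum_apply]
    exact Finset.sum_congr rfl fun p _ => by rw [Matrix.smul_apply, smul_eq_mul]
  -- column sums are independent of the column (semi-causality)
  have hcol : ∀ (y : Fin n) (y' : Fin n') (x x'' : Fin m),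
      ∑ x', Pc (x', y') (x, y) = ∑ x', Pc (x', y') (x'', y) := by
    intro y y' x x''
    have key : ∀ xx : Fin m, ∑ x', Pc (x', y') (xx, y)
        = trA (N (Matrix.single ((xx, y) : Fin m × Fin n) (xx, y) 1)) y' y' := by
      intro xx
      rw [← trA_conj W hW (N (Matrix.single (xx, y) (xx, y) 1)), trA_apply]
    have hsc := hNsc (fun Z => Z.trace • Matrix.single x'' x'' 1) (repl_channel x'')
        (Matrix.single ((x, y) : Fin m × Fin n) (x, y) 1)
    rw [tensorIdRight_repl] at hsc
    rw [key x, key x'', ← hsc]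
  -- row sums are independent of the row (conditional unitality)
  have hrow : ∀ (y : Fin n) (y' : Fin n') (a a' : Fin m),
      ∑ x, Pc (a, y') (x, y) = ∑ x, Pc (a', y') (x, y) := by
    intro y y' a a'
    obtain ⟨τ, hτst, hτeq⟩ := hNcu (Matrix.single y y 1) (stdBasis_state y)
    have hGu : G ((unif m) ⊗ₖ Matrix.single y y 1) = (unif m) ⊗ₖ τ := by
      show (W ⊗ₖ (1 : Matrix (Fin n') (Fin n') ℂ)) * N ((unif m) ⊗ₖ _)
          * (W ⊗ₖ (1 : Matrix (Fin n') (Fin n') ℂ))ᴴ = _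
      rw [hτeq]
      exact conj_unif_kron W hWW τ
    have hexp : G ((unif m) ⊗ₖ Matrix.single y y 1)
        = (m : ℂ)⁻¹ • ∑ x, G (Matrix.single ((x, y) : Fin m × Fin n) (x, y) 1) := by
      rw [unif_kron_basis, hGlin.2]
      congr 1
      rw [show G = ⇑(IsLinearMap.mk' G hGlin) from rfl, map_sum]
    have hm0 : ((m : ℂ))⁻¹ ≠ 0 := inv_ne_zero (Nat.cast_ne_zero.mpr hm.ne')
    have hval : ∀ aa : Fin m, ∑ x, Pc (aa, y') (x, y) = τ y' y' := by
      intro aa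
      have h1 := congrFun (congrFun (hexp.symm.trans hGu) (aa, y')) (aa, y')
      simp only [Matrix.smul_apply, Matrix.sum_apply, smul_eq_mul,
        Matrix.kroneckerMap_apply, unif, Matrix.one_apply_eq] at h1
      refine mul_left_cancel₀ hm0 ?_
      rw [h1]
      ring
    rw [hval a, hval a']
  -- trace normalization
  have htrace1 : ∀ (x : Fin m) (y : Fin n), ∑ y', ∑ x', Pc (x', y') (x, y) = 1 := by
    intro x y
    have h1 : (G (Matrix.single ((x, y) : Fin m × Fin n) (x, y) 1)).trace = 1 := by
      show ((W ⊗ₖ (1 : Matrix (Fin n') (Fin n') ℂ)) * N _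
        * (W ⊗ₖ (1 : Matrix (Fin n') (Fin n') ℂ))ᴴ).trace = 1
      rw [trace_conj W hW, hNtr, trace_stdBasis, if_pos rfl]
    rw [Matrix.trace, Fintype.sum_prod_type] at h1
    rw [Finset.sum_comm]
    exact h1
  -- the scalars s
  set sc : Fin n → Fin n' → ℂ := fun y y' => ∑ x', Pc (x', y') (x0, y) with hscdef
  set s : Fin n → Fin n' → ℝ := fun y y' => ∑ x', P (x', y') (x0, y) with hsdef
  have hsc_real : ∀ y y', sc y y' = ((s y y' : ℝ) : ℂ) := by
    intro y y'
    rw [hscdef, hsdef]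
    simp only [Complex.ofReal_sum]
    exact Finset.sum_congr rfl fun x' _ => hPc_real _ _
  have hs_nonneg : ∀ y y', 0 ≤ s y y' := fun y y' =>
    Finset.sum_nonneg fun x' _ => hPnn _ _
  have hcolsum : ∀ y y' x, ∑ x', Pc (x', y') (x, y) = sc y y' := fun y y' x =>
    hcol y y' x x0
  have hrowsum : ∀ y y' a, ∑ x, Pc (a, y') (x, y) = sc y y' := by
    intro y y' a
    have h1 : ∑ a' : Fin m, ∑ x, Pc (a', y') (x, y) = ∑ _a' : Fin m, sc y y' := by
      rw [Finset.sum_comm]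
      exact Finset.sum_congr rfl fun x _ => hcolsum y y' x
    have h2 : ∑ a' : Fin m, ∑ x, Pc (a', y') (x, y)
        = ∑ _a' : Fin m, (∑ x, Pc (a, y') (x, y)) :=
      Finset.sum_congr rfl fun a' _ => hrow y y' a' a
    have h3 : (m : ℂ) * (∑ x, Pc (a, y') (x, y)) = (m : ℂ) * sc y y' := by
      have := h2.symm.trans h1
      simpa [Finset.sum_const, Finset.card_univ, nsmul_eq_mul] using this
    exact mul_left_cancel₀ (Nat.cast_ne_zero.mpr hm.ne') h3
  have hcolsumR : ∀ y y' x, ∑ x', P (x', y') (x, y) = s y y' := by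
    intro y y' x
    have := hcolsum y y' x
    rw [hsc_real] at this
    have h2 : ((∑ x', P (x', y') (x, y) : ℝ) : ℂ) = ((s y y' : ℝ) : ℂ) := by
      rw [← this, Complex.ofReal_sum]
      exact Finset.sum_congr rfl fun x' _ => (hPc_real _ _).symm
    exact_mod_cast h2
  have hrowsumR : ∀ y y' a, ∑ x, P (a, y') (x, y) = s y y' := by
    intro y y' a
    have := hrowsum y y' a
    rw [hsc_real] at this
    have h2 : ((∑ x, P (a, y') (x, y) : ℝ) : ℂ) = ((s y y' : ℝ) : ℂ) := by
      rw [← this, Complex.ofReal_sum]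
      exact Finset.sum_congr rfl fun x _ => (hPc_real _ _).symm
    exact_mod_cast h2
  have hs1 : ∀ y, ∑ y', s y y' = 1 := by
    intro y
    have h1 := htrace1 x0 y
    have h2 : ((∑ y', s y y' : ℝ) : ℂ) = ((1 : ℝ) : ℂ) := by
      rw [Complex.ofReal_sum, Complex.ofReal_one, ← h1]
      refine Finset.sum_congr rfl fun y' _ => ?_
      rw [← hcolsumR y y' x0, Complex.ofReal_sum]
      exact Finset.sum_congr rfl fun x' _ => (hPc_real _ _).symm
    exact_mod_cast h2
  have hPzero : ∀ y y', s y y' = 0 → ∀ a x, P (a, y') (x, y) = 0 := by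
    intro y y' hs0 a x
    have h1 : ∑ x', P (x', y') (x, y) = 0 := by rw [hcolsumR, hs0]
    exact (Finset.sum_eq_zero_iff_of_nonneg fun x' _ => hPnn _ _).mp h1 a (Finset.mem_univ a)
  -- the doubly stochastic matrices
  set Dp : Fin n → Fin n' → Matrix (Fin m) (Fin m) ℝ := fun y y' =>
    if s y y' = 0 then 1 else Matrix.of fun a x => P (a, y') (x, y) / s y y' with hDpdef
  have hDds : ∀ y y', IsDoublyStochastic (Dp y y') := by
    intro y y'
    by_cases hs0 : s y y' = 0
    · simp only [hDpdef, if_pos hs0]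
      refine ⟨fun x x' => ?_, fun x => ?_, fun x' => ?_⟩
      · rcases eq_or_ne x x' with rfl | h
        · simp
        · simp [Matrix.one_apply, h]
      · simp [Matrix.one_apply, Finset.sum_ite_eq]
      · simp [Matrix.one_apply, Finset.sum_ite_eq]
    · simp only [hDpdef, if_neg hs0]
      have hspos : 0 < s y y' := lt_of_le_of_ne (hs_nonneg y y') (Ne.symm hs0)
      refine ⟨fun a x => div_nonneg (hPnn _ _) hspos.le, fun a => ?_, fun x => ?_⟩
      · show ∑ x, P (a, y') (x, y) / s y y' = 1
        rw [← Finset.sum_div, hrowsumR, div_self hs0]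
      · show ∑ a, P (a, y') (x, y) / s y y' = 1
        rw [← Finset.sum_div, hcolsumR, div_self hs0]
  have hPD : ∀ y y' a x, ((s y y' : ℝ) : ℂ) * ((Dp y y' a x : ℝ) : ℂ) = Pc (a, y') (x, y) := by
    intro y y' a x
    rw [hPc_real]
    by_cases hs0 : s y y' = 0
    · rw [hPzero y y' hs0 a x, hs0]
      simp
    · simp only [hDpdef, if_neg hs0, Matrix.of_apply]
      rw [← Complex.ofReal_mul]
      congr 1
      field_simp
  -- the CP maps
  set FF : Fin n → Fin n' → (Matrix (Fin n) (Fin n) ℂ → Matrix (Fin n') (Fin n') ℂ) :=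
    fun y y' X => (((s y y' : ℝ) : ℂ) * X y y) • Matrix.single y' y' 1 with hFFdef
  have hFFlin : ∀ y y', IsLinearMap ℂ (FF y y') := by
    intro y y'
    constructor
    · intro X Y
      simp only [hFFdef, Matrix.add_apply, mul_add, add_smul]
    · intro c X
      simp only [hFFdef, Matrix.smul_apply, smul_eq_mul, smul_smul]
      congr 1
      ring
  have hFFE : ∀ y y' (z : Fin n) (r r' : Fin n'),
      FF y y' (Matrix.single z z 1) r r'
        = if z = y ∧ y' = r ∧ y' = r' then ((s y y' : ℝ) : ℂ) else 0 := by
    intro y y' z r r'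
    simp only [hFFdef, Matrix.smul_apply, smul_eq_mul]
    by_cases h1 : z = y <;> by_cases h2 : y' = r <;> by_cases h3 : y' = r' <;>
      simp [Matrix.single, ite_and, h1, h2, h3, eq_comm]
  have hFFchoi : ∀ y y', (choiMatrix (FF y y')).PosSemidef := by
    intro y y'
    set B : Matrix (Fin 1) (Fin n × Fin n') ℂ := Matrix.of fun _ p =>
      ((Real.sqrt (s y y') : ℝ) : ℂ) * (if p.1 = y ∧ p.2 = y' then 1 else 0) with hBdef
    have hch : choiMatrix (FF y y') = Bᴴ * B := by
      ext ⟨l, r⟩ ⟨l', r'⟩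
      rw [choiMatrix_apply, Matrix.mul_apply]
      have hE : Matrix.single l l' (1 : ℂ) y y = if l = y ∧ l' = y then 1 else 0 := rfl
      simp only [hFFdef, Matrix.smul_apply, smul_eq_mul, hE, Finset.univ_unique, Finset.sum_singleton,
        Matrix.conjTranspose_apply, hBdef, Matrix.of_apply, star_mul', star_one, star_zero,
        Complex.star_def, Complex.conj_ofReal]
      have hsq : ((Real.sqrt (s y y') : ℝ) : ℂ) * ((Real.sqrt (s y y') : ℝ) : ℂ)
          = ((s y y' : ℝ) : ℂ) := by
        rw [← Complex.ofReal_mul, Real.mul_self_sqrt (hs_nonneg y y')]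
      have hEr : Matrix.single y' y' (1 : ℂ) r r'
          = if y' = r ∧ y' = r' then 1 else 0 := rfl
      rw [hEr, ← hsq]
      by_cases h1 : l = y <;> by_cases h2 : l' = y <;> by_cases h3 : y' = r <;>
        by_cases h4 : y' = r' <;>
        simp [h1, h2, h3, h4, eq_comm, mul_comm, mul_left_comm, mul_assoc]
    rw [hch]
    exact Matrix.posSemidef_conjTranspose_mul_self _
  -- assemble indexed families
  set e : Fin n × Fin n' ≃ Fin (n * n') := finProdFinEquiv with hedef
  refine ⟨n * n', fun j => Dp (e.symm j).1 (e.symm j).2,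
    fun j => FF (e.symm j).1 (e.symm j).2, fun j => hDds _ _, fun j => hFFlin _ _,
    fun j => hFFchoi _ _, ?_, ?_⟩
  · -- trace preservation
    intro X
    have h1 : (∑ j : Fin (n * n'), FF (e.symm j).1 (e.symm j).2 X)
        = ∑ p : Fin n × Fin n', FF p.1 p.2 X := by
      rw [← Equiv.sum_comp e (fun j => FF (e.symm j).1 (e.symm j).2 X)]
      exact Finset.sum_congr rfl fun p _ => by simp
    rw [h1, Matrix.trace_sum, Fintype.sum_prod_type]
    have h2 : ∀ (y : Fin n) (y' : Fin n'), (FF y y' X).trace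
        = ((s y y' : ℝ) : ℂ) * X y y := by
      intro y y'
      simp only [hFFdef, Matrix.trace_smul, smul_eq_mul, trace_stdBasis]
      simp
    simp only [h2]
    have h3 : ∀ y : Fin n, ∑ y', ((s y y' : ℝ) : ℂ) * X y y = X y y := by
      intro y
      rw [← Finset.sum_mul, ← Complex.ofReal_sum, hs1 y, Complex.ofReal_one, one_mul]
    simp only [h3]
    rw [Matrix.trace]
    rfl
  · -- the main identity
    have hsum_pairs : (∑ j : Fin (n * n'),
          tensorMap (dsChannel (Dp (e.symm j).1 (e.symm j).2)) (FF (e.symm j).1 (e.symm j).2) ρ)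
        = ∑ y : Fin n, ∑ y' : Fin n', tensorMap (dsChannel (Dp y y')) (FF y y') ρ := by
      rw [← Equiv.sum_comp e
        (fun j => tensorMap (dsChannel (Dp (e.symm j).1 (e.symm j).2))
          (FF (e.symm j).1 (e.symm j).2) ρ)]
      simp only [Equiv.symm_apply_apply]
      rw [Fintype.sum_prod_type]
    rw [hsum_pairs]
    have hexpand : ∀ y y', tensorMap (dsChannel (Dp y y')) (FF y y') ρ
        = ∑ x : Fin m, ∑ z : Fin n, ρ (x, z) (x, z) •
            (dsChannel (Dp y y') (Matrix.single x x 1)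
              ⊗ₖ FF y y' (Matrix.single z z 1)) := by
      intro y y'
      conv_lhs => rw [diag_eq_sum ρ hρdiag, show tensorMap (dsChannel (Dp y y')) (FF y y')
        = ⇑(IsLinearMap.mk' _ (tensorMap_linear (dsChannel (Dp y y')) (FF y y'))) from rfl]
      rw [map_sum, Fintype.sum_prod_type]
      refine Finset.sum_congr rfl fun x _ => Finset.sum_congr rfl fun z _ => ?_
      rw [LinearMap.map_smul]
      congr 1
      exact tensorMap_basis _ _ x x z z
    ext ⟨a, r⟩ ⟨c, r'⟩
    have hterm : ∀ (y : Fin n) (y' : Fin n') (x : Fin m) (z : Fin n),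
        (ρ (x, z) (x, z) • (dsChannel (Dp y y') (Matrix.single x x 1)
          ⊗ₖ FF y y' (Matrix.single z z 1))) (a, r) (c, r')
        = ρ (x, z) (x, z) * ((if a = c then ((Dp y y' a x : ℝ) : ℂ) else 0)
            * (if z = y ∧ y' = r ∧ y' = r' then ((s y y' : ℝ) : ℂ) else 0)) := by
      intro y y' x z
      rw [Matrix.smul_apply, smul_eq_mul, Matrix.kroneckerMap_apply, dsChannel_basis_apply,
        hFFE]
      simp
    simp only [Matrix.sum_apply, hexpand, hterm]
    by_cases hac : a = c
    · by_cases hrr : r = r'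
      · subst hac; subst hrr
        have hcollapse : ∀ y : Fin n, (∑ y' : Fin n', ∑ x : Fin m, ∑ z : Fin n,
              ρ (x, z) (x, z) * ((if a = a then ((Dp y y' a x : ℝ) : ℂ) else 0)
                * (if z = y ∧ y' = r ∧ y' = r then ((s y y' : ℝ) : ℂ) else 0)))
            = ∑ x : Fin m, ρ (x, y) (x, y) * Pc (a, r) (x, y) := by
          intro y
          rw [Finset.sum_eq_single r]
          · have hz : ∀ x : Fin m, (∑ z : Fin n,
                ρ (x, z) (x, z) * ((if a = a then ((Dp y r a x : ℝ) : ℂ) else 0)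
                  * (if z = y ∧ r = r ∧ r = r then ((s y r : ℝ) : ℂ) else 0)))
                = ρ (x, y) (x, y) * Pc (a, r) (x, y) := by
              intro x
              rw [Finset.sum_eq_single y]
              · rw [if_pos rfl, if_pos ⟨rfl, rfl, rfl⟩, ← hPD y r a x]
                ring
              · intro z _ hz
                simp [hz]
              · intro h; exact absurd (Finset.mem_univ y) h
            rw [Finset.sum_congr rfl fun x _ => hz x]
          · intro y' _ hy'
            refine Finset.sum_eq_zero fun x _ => Finset.sum_eq_zero fun z _ => ?_
            simp [hy']
          · intro h; exact absurd (Finset.mem_univ r) h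
        rw [Finset.sum_congr rfl fun y _ => hcollapse y]
        rw [hσdiagval (a, r), Fintype.sum_prod_type, Finset.sum_comm]
      · have hne : ((a, r) : Fin m × Fin n') ≠ (c, r') := fun h => hrr (congrArg Prod.snd h)
        rw [hσdiag _ _ hne]
        symm
        refine Finset.sum_eq_zero fun y _ => Finset.sum_eq_zero fun y' _ =>
          Finset.sum_eq_zero fun x _ => Finset.sum_eq_zero fun z _ => ?_
        have hz : ¬(z = y ∧ y' = r ∧ y' = r') := fun h => hrr (h.2.1.symm.trans h.2.2)
        simp [hz]
    · have hne : ((a, r) : Fin m × Fin n') ≠ (c, r') := fun h => hac (congrArg Prod.fst h)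
      rw [hσdiag _ _ hne]
      symm
      refine Finset.sum_eq_zero fun y _ => Finset.sum_eq_zero fun y' _ =>
        Finset.sum_eq_zero fun x _ => Finset.sum_eq_zero fun z _ => ?_
      simp [hac]

end Forward


section Backward

lemma cds_to_condMaj {m n n' : ℕ}
    (ρ : Matrix (Fin m × Fin n) (Fin m × Fin n) ℂ)
    (σ : Matrix (Fin m × Fin n') (Fin m × Fin n') ℂ)
    (k : ℕ) (D : Fin k → Matrix (Fin m) (Fin m) ℝ)
    (F : Fin k → (Matrix (Fin n) (Fin n) ℂ → Matrix (Fin n') (Fin n') ℂ))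
    (hD : ∀ j, IsDoublyStochastic (D j)) (hFlin : ∀ j, IsLinearMap ℂ (F j))
    (hFchoi : ∀ j, (choiMatrix (F j)).PosSemidef)
    (hFtr : ∀ X : Matrix (Fin n) (Fin n) ℂ, (∑ j, F j X).trace = X.trace)
    (hσeq : σ = ∑ j, tensorMap (dsChannel (D j)) (F j) ρ) :
    CondMaj ρ σ := by
  set NN : Matrix (Fin m × Fin n) (Fin m × Fin n) ℂ →
      Matrix (Fin m × Fin n') (Fin m × Fin n') ℂ :=
    fun X => ∑ j, tensorMap (dsChannel (D j)) (F j) X with hNN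
  have hlin : IsLinearMap ℂ NN :=
    isLinearMap_sum _ fun j => tensorMap_linear (dsChannel (D j)) (F j)
  have htr : ∀ X, (NN X).trace = X.trace := fun X => trace_sumtensor k D hD F hFtr X
  have hchoi : (choiMatrix NN).PosSemidef := by
    rw [hNN, choiMatrix_sum]
    exact psd_sum _ fun j => choi_tensorMap_psd (D j) (hD j).1 (F j) (hFchoi j)
  have hch : IsChannel NN := ⟨hlin, htr, hchoi⟩
  have hcu : CondUnital NN := by
    intro ρB hρB
    refine ⟨∑ j, F j ρB, ⟨psd_sum _ fun j => cp_psd (F j) (hFlin j) (hFchoi j) hρB.1,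
      by rw [hFtr]; exact hρB.2⟩, ?_⟩
    show ∑ j, tensorMap (dsChannel (D j)) (F j) ((unif m) ⊗ₖ ρB)
      = (unif m) ⊗ₖ ∑ j, F j ρB
    rw [kron_sum]
    refine Finset.sum_congr rfl fun j _ => ?_
    rw [tensorMap_kron _ _ (dsChannel_linear (D j)) (hFlin j), dsChannel_unif (D j) (hD j)]
  have hsc : SemiCausal NN := by
    intro M hM X
    show trA (∑ j, tensorMap (dsChannel (D j)) (F j) (tensorIdRight n M X))
      = trA (∑ j, tensorMap (dsChannel (D j)) (F j) X)
    rw [trA_sum, trA_sum]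
    refine Finset.sum_congr rfl fun j _ => ?_
    rw [trA_tensorMap (D j) (hD j).2.2 (F j) (hFlin j),
      trA_tensorMap (D j) (hD j).2.2 (F j) (hFlin j), trA_tensorIdRight M hM.2.1 X]
  left
  refine ⟨le_refl m, 1, NN, by simp, ⟨hch, hcu, hsc⟩, ?_⟩
  rw [Matrix.one_kronecker_one, Matrix.conjTranspose_one, Matrix.one_mul, Matrix.mul_one]
  exact hσeq

end Backward

/-- For classical (diagonal) bipartite states, quantum conditional majorization with
respect to the first system is equivalent to the existence of a conditionally doubly
stochastic channel mapping one state to the other. -/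
theorem condMaj_iff_cds_of_classical {m n n' : ℕ}
    (ρ : Matrix (Fin m × Fin n) (Fin m × Fin n) ℂ)
    (σ : Matrix (Fin m × Fin n') (Fin m × Fin n') ℂ)
    (hρ : IsState ρ) (hσ : IsState σ)
    (hρdiag : ∀ p q, p ≠ q → ρ p q = 0) (hσdiag : ∀ p q, p ≠ q → σ p q = 0) :
    CondMaj ρ σ ↔
      ∃ (k : ℕ) (D : Fin k → Matrix (Fin m) (Fin m) ℝ)
        (F : Fin k → (Matrix (Fin n) (Fin n) ℂ → Matrix (Fin n') (Fin n') ℂ)),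
        (∀ j, IsDoublyStochastic (D j)) ∧
        (∀ j, IsLinearMap ℂ (F j)) ∧
        (∀ j, (choiMatrix (F j)).PosSemidef) ∧
        (∀ X : Matrix (Fin n) (Fin n) ℂ, (∑ j, F j X).trace = X.trace) ∧
        σ = ∑ j, tensorMap (dsChannel (D j)) (F j) ρ := by
  constructor
  · intro h
    exact condMaj_to_cds ρ σ hρ hσ hρdiag hσdiag h
  · rintro ⟨k, D, F, hD, hFlin, hFchoi, hFtr, hσeq⟩
    exact cds_to_condMaj ρ σ k D F hD hFlin hFchoi hFtr hσeq
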